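/- arXiv:0809.4367 — 2 statements merged into one kernel-verified Lean document; each statement's English description precedes it below -/
import Mathlib

section
/- Let G be a finite connected bridgeless graph of genus g containing a vertex w of valency at least 4 with no loop at w. Construct G' by replacing w with two vertices w_1, w_2 joined by a new edge e, attaching two suitably chosen non-loop edges formerly at w to w_1 and all remaining edges formerly at w to w_2, where the two edges attached to w_1 are chosen so that they go into (possibly equal) components C_1 and C_p of G − w with w having valency ≥ 2 into each component. Then G' is connected, bridgeless, has genus g, and contracting the edge e in G' yields a graph isomorphic to G. -/
attribute [local instance] Classical.propDecidable

noncomputable section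

/-- Number of ends of edge `e` at vertex `v` (a loop counts twice). -/
def endCount {V E : Type} (ends : E → Sym2 V) (v : V) (e : E) : ℕ :=
  Sym2.lift ⟨fun a b => (if a = v then 1 else 0) + (if b = v then 1 else 0),
    fun _ _ => add_comm _ _⟩ (ends e)

/-- Degree of the vertex `v` in the edge set `F` (a loop counts twice). -/
def degIn {V E : Type} (ends : E → Sym2 V) (F : Finset E) (v : V) : ℕ :=
  ∑ e ∈ F, endCount ends v e

/-- An edge set of a multigraph is a forest iff every nonempty subset of it has a
vertex of degree exactly one. -/
def IsForest {V E : Type} (ends : E → Sym2 V) (F : Finset E) : Prop :=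
  ∀ F' ⊆ F, F'.Nonempty → ∃ v, degIn ends F' v = 1

/-- Adjacency in a multigraph. -/
def Adj {V E : Type} (ends : E → Sym2 V) (u v : V) : Prop := ∃ e, ends e = s(u, v)

/-- Connectedness of a multigraph. -/
def Conn {V E : Type} (ends : E → Sym2 V) : Prop :=
  ∀ u v : V, Relation.EqvGen (Adj ends) u v

/-- An edge is a bridge if deleting it disconnects the graph. -/
def IsBridge {V E : Type} (ends : E → Sym2 V) (e : E) : Prop :=
  ¬ Conn (fun e' : {x : E // x ≠ e} => ends e'.1)

/-- Valency of a vertex: a loop counts twice. -/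
def valency {V E : Type} (ends : E → Sym2 V) (v : V) : ℕ :=
  Nat.card {e : E // v ∈ ends e} + Nat.card {e : E // ends e = s(v, v)}

/-- A stable graph: connected, bridgeless, and no vertex of valency 2 unless it
carries a loop. -/
def IsStable {V E : Type} (ends : E → Sym2 V) : Prop :=
  Conn ends ∧ (∀ e, ¬ IsBridge ends e) ∧
    ∀ v, valency ends v = 2 → ∃ e, ends e = s(v, v)

/-- The relation on vertices identifying the endpoints of the contracted edges. -/
def contrRel {V E : Type} (ends : E → Sym2 V) (F : Set E) (u v : V) : Prop :=
  ∃ e ∈ F, ends e = s(u, v)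

/-- Vertices of the contracted graph `G/F`. -/
def CVert {V E : Type} (ends : E → Sym2 V) (F : Set E) : Type :=
  Quotient (Relation.EqvGen.setoid (contrRel ends F))

/-- Edge-end map of the contracted graph `G/F`. -/
def cEnds {V E : Type} (ends : E → Sym2 V) (F : Set E) (e : {e : E // e ∉ F}) :
    Sym2 (CVert ends F) :=
  Sym2.map (Quotient.mk (Relation.EqvGen.setoid (contrRel ends F))) (ends e.1)

/-- Isomorphism of multigraphs. -/
def IsIsoGraph {V1 E1 V2 E2 : Type} (ends1 : E1 → Sym2 V1) (ends2 : E2 → Sym2 V2) : Prop :=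
  ∃ (f : V1 ≃ V2) (g : E1 ≃ E2), ∀ e, Sym2.map f (ends1 e) = ends2 (g e)

end

section helpers
open Relation

lemma eqvGen_map {α β : Type} (f : α → β) {r : α → α → Prop} {s : β → β → Prop}
    (h : ∀ a b, r a b → EqvGen s (f a) (f b)) {a b : α}
    (hr : EqvGen r a b) : EqvGen s (f a) (f b) := by
  induction hr with
  | rel a b hab => exact h a b hab
  | refl a => exact .refl _
  | symm a b _ ih => exact ih.symm _ _
  | trans a b c _ _ ih1 ih2 => exact ih1.trans _ _ _ ih2

/-- Restricting to fewer edges via predicate implication. -/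
lemma eqvGen_pred_mono {V E : Type} (ends : E → Sym2 V) {P Q : E → Prop}
    (h : ∀ e, Q e → P e) {u v : V}
    (hr : Relation.EqvGen (Adj fun e : {e : E // Q e} => ends e.1) u v) :
    Relation.EqvGen (Adj fun e : {e : E // P e} => ends e.1) u v := by
  refine eqvGen_map (f := id) (fun a b hab => ?_) hr
  obtain ⟨⟨e, he⟩, hee⟩ := hab
  exact EqvGen.rel _ _ ⟨⟨e, h e he⟩, hee⟩

/-- Key splitting lemma: removing one more edge `c` with ends `s(a,b)` from a graph,
any connection in the bigger graph decomposes. -/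
lemma eqvGen_split {V E : Type} (ends : E → Sym2 V) (P Q : E → Prop) (c : E) (a b : V)
    (hQ : ∀ e, Q e ↔ P e ∧ e ≠ c) (hc : ends c = s(a, b)) {u v : V}
    (h : Relation.EqvGen (Adj fun e : {e : E // P e} => ends e.1) u v) :
    Relation.EqvGen (Adj fun e : {e : E // Q e} => ends e.1) u v ∨
    (Relation.EqvGen (Adj fun e : {e : E // Q e} => ends e.1) u a ∧
     Relation.EqvGen (Adj fun e : {e : E // Q e} => ends e.1) b v) ∨
    (Relation.EqvGen (Adj fun e : {e : E // Q e} => ends e.1) u b ∧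
     Relation.EqvGen (Adj fun e : {e : E // Q e} => ends e.1) a v) := by
  induction h with
  | rel u v huv =>
    obtain ⟨⟨e, he⟩, hee⟩ := huv
    have hee' : ends e = s(u, v) := hee
    by_cases hec : e = c
    · rw [hec, hc] at hee'
      rcases Sym2.eq_iff.mp hee'.symm with ⟨rfl, rfl⟩ | ⟨rfl, rfl⟩
      · exact Or.inr (Or.inl ⟨EqvGen.refl _, EqvGen.refl _⟩)
      · exact Or.inr (Or.inr ⟨EqvGen.refl _, EqvGen.refl _⟩)
    · exact Or.inl (EqvGen.rel _ _ ⟨⟨e, (hQ e).mpr ⟨he, hec⟩⟩, hee⟩)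
  | refl u => exact Or.inl (EqvGen.refl _)
  | symm u v _ ih =>
    rcases ih with h | ⟨h1, h2⟩ | ⟨h1, h2⟩
    · exact Or.inl (h.symm _ _)
    · exact Or.inr (Or.inr ⟨h2.symm _ _, h1.symm _ _⟩)
    · exact Or.inr (Or.inl ⟨h2.symm _ _, h1.symm _ _⟩)
  | trans u v t _ _ ih1 ih2 =>
    rcases ih1 with h | ⟨h1, h2⟩ | ⟨h1, h2⟩ <;>
      rcases ih2 with h' | ⟨h1', h2'⟩ | ⟨h1', h2'⟩
    · exact Or.inl (h.trans _ _ _ h')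
    · exact Or.inr (Or.inl ⟨h.trans _ _ _ h1', h2'⟩)
    · exact Or.inr (Or.inr ⟨h.trans _ _ _ h1', h2'⟩)
    · exact Or.inr (Or.inl ⟨h1, h2.trans _ _ _ h'⟩)
    · exact Or.inl ((h1.trans _ _ _ ((h2.trans _ _ _ h1').symm _ _)).trans _ _ _ h2')
    · exact Or.inl (h1.trans _ _ _ h2')
    · exact Or.inr (Or.inr ⟨h1, h2.trans _ _ _ h'⟩)
    · exact Or.inl (h1.trans _ _ _ h2')
    · exact Or.inl ((h1.trans _ _ _ ((h2.trans _ _ _ h1').symm _ _)).trans _ _ _ h2')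
end helpers

open Relation in
lemma choose_two {V E : Type} [Fintype E] (ends : E → Sym2 V)
    (hbr : ∀ c, Conn (fun e' : {x : E // x ≠ c} => ends e'.1))
    (w : V) (hval : 4 ≤ Nat.card {e : E // w ∈ ends e})
    (hnoloop : ∀ e, ends e ≠ s(w, w)) :
    ∃ d1 d2 : E, ∃ x1 x2 : V, d1 ≠ d2 ∧ ends d1 = s(w, x1) ∧ x1 ≠ w ∧
      ends d2 = s(w, x2) ∧ x2 ≠ w ∧
      Conn (fun e : {e : E // e ≠ d1 ∧ e ≠ d2} => ends e.1) := by
  classical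
  -- extract three distinct incident edges
  have hcard : 4 ≤ (Finset.univ.filter (fun e : E => w ∈ ends e)).card := by
    rw [← Fintype.card_subtype]
    rwa [Nat.card_eq_fintype_card] at hval
  obtain ⟨d1, hd1mem⟩ : (Finset.univ.filter (fun e : E => w ∈ ends e)).Nonempty :=
    Finset.card_pos.mp (by omega)
  have hcard2 : 1 < ((Finset.univ.filter (fun e : E => w ∈ ends e)).erase d1).card := by
    have := Finset.card_erase_of_mem hd1mem
    omega
  obtain ⟨b1, hb1mem, b2, hb2mem, hb12⟩ := Finset.one_lt_card.mp hcard2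
  have hb1d1 : b1 ≠ d1 := Finset.ne_of_mem_erase hb1mem
  have hb2d1 : b2 ≠ d1 := Finset.ne_of_mem_erase hb2mem
  have hinc : ∀ e ∈ Finset.univ.filter (fun e : E => w ∈ ends e), ∃ y, ends e = s(w, y) ∧ y ≠ w := by
    intro e he
    have hw : w ∈ ends e := (Finset.mem_filter.mp he).2
    obtain ⟨y, hy⟩ := Sym2.mem_iff_exists.mp hw
    exact ⟨y, hy, fun h => hnoloop e (by rw [hy, h])⟩
  obtain ⟨x, hdx, hxw⟩ := hinc d1 hd1mem
  obtain ⟨y1, hb1e, hy1w⟩ := hinc b1 (Finset.mem_of_mem_erase hb1mem)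
  obtain ⟨y2, hb2e, hy2w⟩ := hinc b2 (Finset.mem_of_mem_erase hb2mem)
  by_cases hA : Conn (fun e : {e : E // e ≠ b1 ∧ e ≠ d1} => ends e.1)
  · exact ⟨b1, d1, y1, x, hb1d1, hb1e, hy1w, hdx, hxw, hA⟩
  by_cases hB : Conn (fun e : {e : E // e ≠ b2 ∧ e ≠ d1} => ends e.1)
  · exact ⟨b2, d1, y2, x, hb2d1, hb2e, hy2w, hdx, hxw, hB⟩
  exfalso
  simp only [Conn, not_forall] at hA hB
  obtain ⟨u1, v1, hA⟩ := hA
  obtain ⟨u2, v2, hB⟩ := hB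
  set P1 : E → Prop := fun e => e ≠ b1 ∧ e ≠ d1 with hP1
  set P2 : E → Prop := fun e => e ≠ b2 ∧ e ≠ d1 with hP2
  set P0 : E → Prop := fun e => P1 e ∧ e ≠ b2 with hP0
  have hwx1 : ¬ Relation.EqvGen (Adj fun e : {e : E // P1 e} => ends e.1) w x := by
    intro hwx
    apply hA
    rcases eqvGen_split ends (fun e => e ≠ b1) P1 d1 w x (fun e => Iff.rfl) hdx
        (hbr b1 u1 v1) with h | ⟨h1, h2⟩ | ⟨h1, h2⟩
    · exact h
    · exact (h1.trans _ _ _ hwx).trans _ _ _ h2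
    · exact (h1.trans _ _ _ (hwx.symm _ _)).trans _ _ _ h2
  have hwx2 : ¬ Relation.EqvGen (Adj fun e : {e : E // P2 e} => ends e.1) w x := by
    intro hwx
    apply hB
    rcases eqvGen_split ends (fun e => e ≠ b2) P2 d1 w x (fun e => Iff.rfl) hdx
        (hbr b2 u2 v2) with h | ⟨h1, h2⟩ | ⟨h1, h2⟩
    · exact h
    · exact (h1.trans _ _ _ hwx).trans _ _ _ h2
    · exact (h1.trans _ _ _ (hwx.symm _ _)).trans _ _ _ h2
  have h01 : ∀ e, P0 e → P1 e := fun e h => h.1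
  have h02 : ∀ e, P0 e → P2 e := fun e h => ⟨h.2, h.1.2⟩
  have hR0y1x : ¬ Relation.EqvGen (Adj fun e : {e : E // P0 e} => ends e.1) y1 x := by
    intro h
    exact hwx2 ((EqvGen.rel w y1 ⟨⟨b1, hb12, hb1d1⟩, hb1e⟩).trans _ _ _
      (eqvGen_pred_mono ends h02 h))
  have hR0y2x : ¬ Relation.EqvGen (Adj fun e : {e : E // P0 e} => ends e.1) y2 x := by
    intro h
    exact hwx1 ((EqvGen.rel w y2 ⟨⟨b2, hb12.symm, hb2d1⟩, hb2e⟩).trans _ _ _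
      (eqvGen_pred_mono ends h01 h))
  have hR0wx : ¬ Relation.EqvGen (Adj fun e : {e : E // P0 e} => ends e.1) w x :=
    fun h => hwx1 (eqvGen_pred_mono ends h01 h)
  have hR1y1x : Relation.EqvGen (Adj fun e : {e : E // P1 e} => ends e.1) y1 x := by
    rcases eqvGen_split ends (fun e => e ≠ d1) P1 b1 w y1
        (fun e => ⟨fun h => ⟨h.2, h.1⟩, fun h => ⟨h.2, h.1⟩⟩) hb1e (hbr d1 w x)
      with h | ⟨h1, h2⟩ | ⟨h1, h2⟩
    · exact absurd h hwx1
    · exact h2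
    · exact absurd h2 hwx1
  rcases eqvGen_split ends P1 P0 b2 w y2 (fun e => Iff.rfl) hb2e hR1y1x
    with h | ⟨h1, h2⟩ | ⟨h1, h2⟩
  · exact hR0y1x h
  · exact hR0y2x h2
  · exact hR0wx h2

open Relation

section split
variable {V E : Type} (ends : E → Sym2 V) (w : V) (d1 d2 : E)

/-- The split graph's edge-end map. -/
noncomputable def splitEnds : Option E → Sym2 (Option V) :=
  fun e' => match e' with
  | none => s((none : Option V), some w)
  | some e => if e = d1 ∨ e = d2
      then Sym2.map (fun u => if u = w then none else some u) (ends e)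
      else Sym2.map some (ends e)

variable {x1 x2 : V}

lemma splitEnds_none : splitEnds ends w d1 d2 none = s((none : Option V), some w) := rfl

lemma splitEnds_d1 (h1 : ends d1 = s(w, x1)) (hx1 : x1 ≠ w) :
    splitEnds ends w d1 d2 (some d1) = s((none : Option V), some x1) := by
  show (if d1 = d1 ∨ d1 = d2 then Sym2.map (fun u => if u = w then none else some u) (ends d1)
      else Sym2.map some (ends d1)) = _
  rw [if_pos (Or.inl rfl), h1, Sym2.map_pair_eq, if_pos rfl, if_neg hx1]

lemma splitEnds_d2 (h2 : ends d2 = s(w, x2)) (hx2 : x2 ≠ w) :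
    splitEnds ends w d1 d2 (some d2) = s((none : Option V), some x2) := by
  show (if d2 = d1 ∨ d2 = d2 then Sym2.map (fun u => if u = w then none else some u) (ends d2)
      else Sym2.map some (ends d2)) = _
  rw [if_pos (Or.inr rfl), h2, Sym2.map_pair_eq, if_pos rfl, if_neg hx2]

lemma splitEnds_other (e : E) (he1 : e ≠ d1) (he2 : e ≠ d2) :
    splitEnds ends w d1 d2 (some e) = Sym2.map some (ends e) := by
  simp only [splitEnds, if_neg (by tauto : ¬ (e = d1 ∨ e = d2))]

/-- Base step: any old edge that is kept gives a connection in the split graph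
between the `some`-images of its endpoints, provided the new edge is kept. -/
lemma split_step (h1 : ends d1 = s(w, x1)) (hx1 : x1 ≠ w)
    (h2 : ends d2 = s(w, x2)) (hx2 : x2 ≠ w) (keep : Option E → Prop) (hnone : keep none)
    (e : E) (he : keep (some e)) {a b : V} (hends : ends e = s(a, b)) :
    EqvGen (Adj fun x : {x : Option E // keep x} => splitEnds ends w d1 d2 x.1)
      (some a) (some b) := by
  have hwnone : EqvGen (Adj fun x : {x : Option E // keep x} => splitEnds ends w d1 d2 x.1)
      (some w) (none : Option V) :=
    EqvGen.rel _ _ ⟨⟨none, hnone⟩, by rw [show (fun x : {x : Option E // keep x} =>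
      splitEnds ends w d1 d2 x.1) ⟨none, hnone⟩ = s((none : Option V), some w) from rfl,
      Sym2.eq_swap]⟩
  by_cases hd : e = d1 ∨ e = d2
  · rcases hd with he1 | he2
    · have hst : EqvGen (Adj fun x : {x : Option E // keep x} => splitEnds ends w d1 d2 x.1)
          (none : Option V) (some x1) :=
        EqvGen.rel _ _ ⟨⟨some e, he⟩, by
          rw [show (fun x : {x : Option E // keep x} => splitEnds ends w d1 d2 x.1)
            ⟨some e, he⟩ = splitEnds ends w d1 d2 (some e) from rfl, he1]
          exact splitEnds_d1 ends w d1 d2 h1 hx1⟩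
      rw [he1, h1] at hends
      rcases Sym2.eq_iff.mp hends.symm with ⟨rfl, rfl⟩ | ⟨rfl, rfl⟩
      · exact hwnone.trans _ _ _ hst
      · exact (hwnone.trans _ _ _ hst).symm _ _
    · have hst : EqvGen (Adj fun x : {x : Option E // keep x} => splitEnds ends w d1 d2 x.1)
          (none : Option V) (some x2) :=
        EqvGen.rel _ _ ⟨⟨some e, he⟩, by
          rw [show (fun x : {x : Option E // keep x} => splitEnds ends w d1 d2 x.1)
            ⟨some e, he⟩ = splitEnds ends w d1 d2 (some e) from rfl, he2]
          exact splitEnds_d2 ends w d1 d2 h2 hx2⟩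
      rw [he2, h2] at hends
      rcases Sym2.eq_iff.mp hends.symm with ⟨rfl, rfl⟩ | ⟨rfl, rfl⟩
      · exact hwnone.trans _ _ _ hst
      · exact (hwnone.trans _ _ _ hst).symm _ _
  · push_neg at hd
    refine EqvGen.rel _ _ ⟨⟨some e, he⟩, ?_⟩
    rw [show (fun x : {x : Option E // keep x} => splitEnds ends w d1 d2 x.1) ⟨some e, he⟩ =
      splitEnds ends w d1 d2 (some e) from rfl,
      splitEnds_other ends w d1 d2 e hd.1 hd.2, hends, Sym2.map_pair_eq]

/-- Deleting the new edge keeps the split graph connected. -/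
lemma conn_minus_none (h1 : ends d1 = s(w, x1)) (hx1 : x1 ≠ w) (hd12 : d1 ≠ d2)
    (hC : Conn (fun e : {e : E // e ≠ d1 ∧ e ≠ d2} => ends e.1)) :
    Conn (fun x : {x : Option E // x ≠ none} => splitEnds ends w d1 d2 x.1) := by
  have hsome : ∀ a b : V, EqvGen
      (Adj fun x : {x : Option E // x ≠ none} => splitEnds ends w d1 d2 x.1)
      (some a) (some b) := by
    intro a b
    refine eqvGen_map (f := some) (fun a b hab => ?_) (hC a b)
    obtain ⟨⟨e, he1, he2⟩, hee⟩ := hab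
    refine EqvGen.rel _ _ ⟨⟨some e, by simp⟩, ?_⟩
    rw [show (fun x : {x : Option E // x ≠ none} => splitEnds ends w d1 d2 x.1)
        ⟨some e, by simp⟩ = splitEnds ends w d1 d2 (some e) from rfl,
      splitEnds_other ends w d1 d2 e he1 he2,
      show ends e = s(a, b) from hee, Sym2.map_pair_eq]
  have hnx1 : EqvGen (Adj fun x : {x : Option E // x ≠ none} => splitEnds ends w d1 d2 x.1)
      (none : Option V) (some x1) :=
    EqvGen.rel _ _ ⟨⟨some d1, by simp⟩, splitEnds_d1 ends w d1 d2 h1 hx1⟩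
  intro u v
  match u, v with
  | none, none => exact EqvGen.refl _
  | none, some b => exact hnx1.trans _ _ _ (hsome x1 b)
  | some a, none => exact (hnx1.trans _ _ _ (hsome x1 a)).symm _ _
  | some a, some b => exact hsome a b

/-- Deleting an old edge keeps the split graph connected. -/
lemma conn_minus_some (h1 : ends d1 = s(w, x1)) (hx1 : x1 ≠ w)
    (h2 : ends d2 = s(w, x2)) (hx2 : x2 ≠ w) (c : E) (hC : Conn (fun e : {e : E // e ≠ c} => ends e.1)) :
    Conn (fun x : {x : Option E // x ≠ some c} => splitEnds ends w d1 d2 x.1) := by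
  have hnone : (none : Option E) ≠ some c := by simp
  have hsome : ∀ a b : V, EqvGen
      (Adj fun x : {x : Option E // x ≠ some c} => splitEnds ends w d1 d2 x.1)
      (some a) (some b) := by
    intro a b
    refine eqvGen_map (f := some) (fun a b hab => ?_) (hC a b)
    obtain ⟨⟨e, he⟩, hee⟩ := hab
    exact split_step ends w d1 d2 h1 hx1 h2 hx2 (fun x => x ≠ some c) hnone e
      (by simpa using he) hee
  have hwn : EqvGen (Adj fun x : {x : Option E // x ≠ some c} => splitEnds ends w d1 d2 x.1)
      (some w) (none : Option V) :=
    EqvGen.rel _ _ ⟨⟨none, hnone⟩, by rw [show (fun x : {x : Option E // x ≠ some c} =>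
      splitEnds ends w d1 d2 x.1) ⟨none, hnone⟩ = s((none : Option V), some w) from rfl,
      Sym2.eq_swap]⟩
  intro u v
  match u, v with
  | none, none => exact EqvGen.refl _
  | none, some b => exact (hwn.symm _ _).trans _ _ _ (hsome w b)
  | some a, none => exact (hsome a w).trans _ _ _ hwn
  | some a, some b => exact hsome a b

end split

section split2
variable {V E : Type} [Fintype E] (ends : E → Sym2 V) (w : V) (d1 d2 : E) {x1 x2 : V}

lemma split_valency (h1 : ends d1 = s(w, x1)) (hx1 : x1 ≠ w)
    (h2 : ends d2 = s(w, x2)) (hx2 : x2 ≠ w) (hd12 : d1 ≠ d2) :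
    valency (splitEnds ends w d1 d2) (none : Option V) = 3 := by
  have hset : {x : Option E | (none : Option V) ∈ splitEnds ends w d1 d2 x} =
      {none, some d1, some d2} := by
    ext x
    match x with
    | none =>
      simp only [Set.mem_setOf_eq, splitEnds_none, Sym2.mem_iff, Set.mem_insert_iff,
        Set.mem_singleton_iff]
      tauto
    | some e =>
      by_cases he1 : e = d1
      · subst he1
        simp only [Set.mem_setOf_eq, splitEnds_d1 ends w e d2 h1 hx1, Sym2.mem_iff,
          Set.mem_insert_iff, Set.mem_singleton_iff]
        tauto
      by_cases he2 : e = d2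
      · subst he2
        simp only [Set.mem_setOf_eq, splitEnds_d2 ends w d1 e h2 hx2, Sym2.mem_iff,
          Set.mem_insert_iff, Set.mem_singleton_iff]
        tauto
      · simp only [Set.mem_setOf_eq, splitEnds_other ends w d1 d2 e he1 he2, Sym2.mem_map,
          Set.mem_insert_iff, Set.mem_singleton_iff]
        simp [he1, he2]
  have hmain : Nat.card {x : Option E // (none : Option V) ∈ splitEnds ends w d1 d2 x} = 3 := by
    have h0 : Nat.card {x : Option E // (none : Option V) ∈ splitEnds ends w d1 d2 x} =
        ({x : Option E | (none : Option V) ∈ splitEnds ends w d1 d2 x}).ncard :=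
      Nat.card_coe_set_eq _
    rw [h0, hset, Set.ncard_insert_of_notMem (by simp), Set.ncard_pair (by simpa using hd12)]
  have hloop : Nat.card {x : Option E // splitEnds ends w d1 d2 x = s((none : Option V), none)} = 0 := by
    have : IsEmpty {x : Option E // splitEnds ends w d1 d2 x = s((none : Option V), none)} := by
      constructor
      rintro ⟨x, hx⟩
      match x with
      | none =>
        rw [splitEnds_none] at hx
        simp [Sym2.eq_iff] at hx
      | some e =>
        by_cases he1 : e = d1
        · subst he1
          rw [splitEnds_d1 ends w e d2 h1 hx1] at hx
          simp [Sym2.eq_iff] at hx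
        by_cases he2 : e = d2
        · subst he2
          rw [splitEnds_d2 ends w d1 e h2 hx2] at hx
          simp [Sym2.eq_iff] at hx
        · rw [splitEnds_other ends w d1 d2 e he1 he2] at hx
          have : (none : Option V) ∈ Sym2.map some (ends e) := by
            rw [hx]; exact Sym2.mem_mk_left _ _
          obtain ⟨a, -, ha⟩ := Sym2.mem_map.mp this
          exact Option.some_ne_none _ ha
    exact Nat.card_of_isEmpty
  rw [valency, hmain, hloop]

lemma split_contract_iso (h1 : ends d1 = s(w, x1)) (hx1 : x1 ≠ w)
    (h2 : ends d2 = s(w, x2)) (hx2 : x2 ≠ w) :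
    IsIsoGraph (cEnds (splitEnds ends w d1 d2) ({none} : Set (Option E))) ends := by
  set S := Relation.EqvGen.setoid (contrRel (splitEnds ends w d1 d2) ({none} : Set (Option E)))
    with hS
  have hlift : ∀ a b : Option V, Relation.EqvGen
      (contrRel (splitEnds ends w d1 d2) ({none} : Set (Option E))) a b →
      a.getD w = b.getD w := by
    intro a b h
    induction h with
    | rel a b hab =>
      obtain ⟨e, he, hee⟩ := hab
      rw [Set.mem_singleton_iff] at he
      subst he
      rw [splitEnds_none] at hee
      rcases Sym2.eq_iff.mp hee with ⟨h1', h2'⟩ | ⟨h1', h2'⟩ <;>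
        · rw [← h1', ← h2']; rfl
    | refl a => rfl
    | symm a b _ ih => exact ih.symm
    | trans a b c _ _ ih1 ih2 => exact ih1.trans ih2
  have hwnone : (Quotient.mk S (some w) : CVert (splitEnds ends w d1 d2) {none}) =
      Quotient.mk S none :=
    Quotient.sound ((Relation.EqvGen.rel _ _
      ⟨none, Set.mem_singleton _, rfl⟩).symm _ _)
  set f : CVert (splitEnds ends w d1 d2) ({none} : Set (Option E)) ≃ V := {
    toFun := Quotient.lift (fun o : Option V => o.getD w) hlift
    invFun := fun v => Quotient.mk S (some v)
    left_inv := by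
      intro q
      induction q using Quotient.ind with
      | _ o =>
        match o with
        | none => exact hwnone
        | some v => rfl
    right_inv := fun v => rfl } with hf
  set g : {x : Option E // x ∉ ({none} : Set (Option E))} ≃ E := {
    toFun := fun x => x.1.getD d1
    invFun := fun e => ⟨some e, by simp⟩
    left_inv := by
      rintro ⟨x, hx⟩
      match x with
      | none => exact absurd (Set.mem_singleton _) hx
      | some e => rfl
    right_inv := fun e => rfl } with hg
  refine ⟨f, g, ?_⟩
  rintro ⟨x, hx⟩
  match x with
  | none => exact absurd (Set.mem_singleton _) hx
  | some e =>
    show Sym2.map ⇑f (Sym2.map (Quotient.mk S) (splitEnds ends w d1 d2 (some e))) = ends e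
    erw [Sym2.map_map]
    have hcomp : (⇑f ∘ Quotient.mk S) = (fun o : Option V => o.getD w) := rfl
    rw [hcomp]
    have hge : ends (g ⟨some e, hx⟩) = ends e := rfl
    by_cases he1 : e = d1
    · subst he1
      rw [splitEnds_d1 ends w e d2 h1 hx1, Sym2.map_pair_eq, h1]
      rfl
    by_cases he2 : e = d2
    · subst he2
      rw [splitEnds_d2 ends w d1 e h2 hx2, Sym2.map_pair_eq, h2]
      rfl
    · rw [splitEnds_other ends w d1 d2 e he1 he2, Sym2.map_map]
      have hid : ((fun o : Option V => o.getD w) ∘ some) = id := rfl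
      rw [hid, Sym2.map_id, id]

end split2

/-- splitting a loopless vertex `w` of valency ≥ 4 in a finite connected
bridgeless graph of genus `g` into two vertices `w1, w2` joined by a new edge `e`
(two suitably chosen old edges going to `w1`, the rest to `w2`) produces a connected
bridgeless graph of genus `g` in which `w1` has valency 3 and whose contraction
along `e` is isomorphic to the original graph. -/
theorem stmt4 {V E : Type} [Fintype V] [Fintype E] (ends : E → Sym2 V) (g : ℤ)
    (hconn : Conn ends) (hbr : ∀ e, ¬ IsBridge ends e)
    (w : V) (hval : 4 ≤ valency ends w) (hnoloop : ∀ e, ends e ≠ s(w, w))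
    (hg : (Nat.card E : ℤ) - Nat.card V + 1 = g) :
    ∃ (V' E' : Type) (_ : Fintype V') (_ : Fintype E') (ends' : E' → Sym2 V')
      (w1 w2 : V') (e : E'),
      ends' e = s(w1, w2) ∧ w1 ≠ w2 ∧
      Conn ends' ∧ (∀ e', ¬ IsBridge ends' e') ∧
      (Nat.card E' : ℤ) - Nat.card V' + 1 = g ∧
      valency ends' w1 = 3 ∧
      IsIsoGraph (cEnds ends' ({e} : Set E')) ends := by
  have hbr' : ∀ c, Conn (fun e' : {x : E // x ≠ c} => ends e'.1) := fun c => not_not.mp (hbr c)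
  have hloop0 : Nat.card {e : E // ends e = s(w, w)} = 0 :=
    @Nat.card_of_isEmpty _ ⟨fun x => hnoloop x.1 x.2⟩
  have hval' : 4 ≤ Nat.card {e : E // w ∈ ends e} := by
    unfold valency at hval
    omega
  obtain ⟨d1, d2, x1, x2, hd12, hdx1, hx1, hdx2, hx2, hC⟩ :=
    choose_two ends hbr' w hval' hnoloop
  refine ⟨Option V, Option E, inferInstance, inferInstance, splitEnds ends w d1 d2,
    none, some w, none, rfl, by simp, ?_, ?_, ?_,
    split_valency ends w d1 d2 hdx1 hx1 hdx2 hx2 hd12,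
    split_contract_iso ends w d1 d2 hdx1 hx1 hdx2 hx2⟩
  · -- connectivity
    intro u v
    refine eqvGen_map (f := id)
      (fun a b hab => ?_) (conn_minus_none ends w d1 d2 hdx1 hx1 hd12 hC u v)
    obtain ⟨⟨x, hx⟩, hee⟩ := hab
    exact Relation.EqvGen.rel _ _ ⟨x, hee⟩
  · -- bridgelessness
    intro e' hbridge
    apply hbridge
    match e' with
    | none => exact conn_minus_none ends w d1 d2 hdx1 hx1 hd12 hC
    | some c => exact conn_minus_some ends w d1 d2 hdx1 hx1 hdx2 hx2 c (hbr' c)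
  · -- genus
    have hE : Nat.card (Option E) = Nat.card E + 1 := by
      rw [Nat.card_eq_fintype_card, Nat.card_eq_fintype_card, Fintype.card_option]
    have hV : Nat.card (Option V) = Nat.card V + 1 := by
      rw [Nat.card_eq_fintype_card, Nat.card_eq_fintype_card, Fintype.card_option]
    rw [hE, hV]
    push_cast
    linarith [hg]
end

section
/- For every k ≥ 3, the graph consisting of a k-cycle with i loops attached at the i-th vertex (for i = 1,...,k) has exactly k orbits of spanning trees under its automorphism group; in fact its automorphism group fixes every vertex of the cycle, and its spanning trees are obtained by deleting one of the k cycle edges, no two of which are related by an automorphism. -/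
attribute [local instance] Classical.propDecidable

/-- for `k ≥ 3`, the graph consisting of a `k`-cycle with `j+1` loops
attached at the `j`-th vertex (`j = 0,…,k-1`, i.e. `i` loops at vertex number `i` for
`i = 1,…,k`) has trivial automorphism action on vertices; its spanning trees are
exactly the sets obtained from the cycle edges by deleting one of them, and no two of
these are related by an automorphism — so there are exactly `k` orbits of spanning
trees. -/
theorem stmt10 (k : ℕ) (hk : 3 ≤ k)
    (ends : (Fin k ⊕ (Σ j : Fin k, Fin (j.val + 1))) → Sym2 (Fin k))
    (hcyc : ∀ i : Fin k,
      ends (Sum.inl i) = s(i, ⟨(i.val + 1) % k, Nat.mod_lt _ (by omega)⟩))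
    (hloop : ∀ (j : Fin k) (a : Fin (j.val + 1)), ends (Sum.inr ⟨j, a⟩) = s(j, j)) :
    (∀ (f : Fin k ≃ Fin k)
        (gp : (Fin k ⊕ (Σ j : Fin k, Fin (j.val + 1))) ≃
              (Fin k ⊕ (Σ j : Fin k, Fin (j.val + 1)))),
        (∀ e, Sym2.map f (ends e) = ends (gp e)) → f = Equiv.refl _) ∧
    (∀ T : Finset (Fin k ⊕ (Σ j : Fin k, Fin (j.val + 1))),
        (IsForest ends T ∧ T.card = k - 1) ↔
          ∃ i : Fin k,
            T = (Finset.univ.image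
                  (Sum.inl : Fin k → (Fin k ⊕ (Σ j : Fin k, Fin (j.val + 1))))).erase
                (Sum.inl i)) ∧
    (∀ (i i' : Fin k) (f : Fin k ≃ Fin k)
        (gp : (Fin k ⊕ (Σ j : Fin k, Fin (j.val + 1))) ≃
              (Fin k ⊕ (Σ j : Fin k, Fin (j.val + 1)))),
        (∀ e, Sym2.map f (ends e) = ends (gp e)) →
        Finset.image gp
            ((Finset.univ.image
                (Sum.inl : Fin k → (Fin k ⊕ (Σ j : Fin k, Fin (j.val + 1))))).erase
              (Sum.inl i)) =
          (Finset.univ.image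
              (Sum.inl : Fin k → (Fin k ⊕ (Σ j : Fin k, Fin (j.val + 1))))).erase
            (Sum.inl i') →
        i = i') := by
  classical
  haveI : NeZero k := ⟨by omega⟩
  have hone : (1 : Fin k).val = 1 := by
    simp [Fin.val_one, Nat.mod_eq_of_lt (by omega : 1 < k)]
  -- the cycle successor as +1
  have hcyc' : ∀ i : Fin k, ends (Sum.inl i) = s(i, i + 1) := by
    intro i
    have he : (⟨(i.val + 1) % k, Nat.mod_lt _ (by omega)⟩ : Fin k) = i + 1 := by
      ext
      simp [Fin.val_add, hone]
    rw [hcyc i, he]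
  have hne1 : ∀ i : Fin k, i + 1 ≠ i := by
    intro i h
    have := congrArg Fin.val h
    rw [Fin.val_add, hone] at this
    rcases Nat.lt_or_ge (i.val + 1) k with h1 | h1
    · rw [Nat.mod_eq_of_lt h1] at this; omega
    · have : (i.val + 1) % k = 0 := by
        have : i.val + 1 = k := by omega
        simp [this]
      omega
  have hne2 : ∀ i : Fin k, i + 1 + 1 ≠ i := by
    intro i h
    have := congrArg Fin.val h
    rw [Fin.val_add, Fin.val_add, hone] at this
    have hi := i.isLt
    rcases Nat.lt_or_ge (i.val + 1) k with h1 | h1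
    · rw [Nat.mod_eq_of_lt h1] at this
      rcases Nat.lt_or_ge (i.val + 2) k with h2 | h2
      · rw [Nat.mod_eq_of_lt h2] at this; omega
      · have e2 : i.val + 1 + 1 = k := by omega
        rw [e2, Nat.mod_self] at this; omega
    · have e1 : i.val + 1 = k := by omega
      rw [e1, Nat.mod_self] at this
      simp [Nat.mod_eq_of_lt (by omega : 1 < k)] at this
      omega
  -- edges whose ends form a loop at w are exactly the loops at w
  have hloopOf : ∀ (e : Fin k ⊕ (Σ j : Fin k, Fin (j.val + 1))) (w : Fin k),
      ends e = s(w, w) → ∃ b : Fin (w.val + 1), e = Sum.inr ⟨w, b⟩ := by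
    intro e w he
    rcases e with m | ⟨j, a⟩
    · rw [hcyc' m] at he
      rw [Sym2.eq_iff] at he
      rcases he with ⟨h1, h2⟩ | ⟨h1, h2⟩ <;> (subst h1; exact absurd h2 (hne1 m))
    · rw [hloop j a] at he
      rw [Sym2.eq_iff] at he
      have : j = w := by tauto
      subst this
      exact ⟨a, rfl⟩
  -- any graph automorphism fixes every vertex
  have hfix : ∀ (f : Fin k ≃ Fin k)
      (gp : (Fin k ⊕ (Σ j : Fin k, Fin (j.val + 1))) ≃
            (Fin k ⊕ (Σ j : Fin k, Fin (j.val + 1)))),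
      (∀ e, Sym2.map f (ends e) = ends (gp e)) → ∀ v : Fin k, f v = v := by
    intro f gp h
    have hle : ∀ v : Fin k, v.val ≤ (f v).val := by
      intro v
      have key : ∀ a : Fin (v.val + 1), ∃ b : Fin ((f v).val + 1),
          gp (Sum.inr ⟨v, a⟩) = Sum.inr ⟨f v, b⟩ := by
        intro a
        have := h (Sum.inr ⟨v, a⟩)
        rw [hloop v a, Sym2.map_pair_eq] at this
        exact hloopOf _ _ this.symm
      choose ψ hψ using key
      have hinj : Function.Injective ψ := by
        intro a a' haa
        have : gp (Sum.inr ⟨v, a⟩) = gp (Sum.inr ⟨v, a'⟩) := by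
          rw [hψ a, hψ a', haa]
        have := gp.injective this
        have := Sum.inr.inj this
        simpa using this
      have := Fintype.card_le_of_injective ψ hinj
      simpa using this
    intro v
    have hsum : ∑ w : Fin k, (f w).val = ∑ w : Fin k, w.val :=
      Equiv.sum_comp f (fun w => w.val)
    have := (Finset.sum_eq_sum_iff_of_le (fun i _ => hle i)).mp hsum.symm v
      (Finset.mem_univ v)
    exact Fin.ext this.symm
  refine ⟨fun f gp h => Equiv.ext fun v => hfix f gp h v, ?_, ?_⟩
  · -- characterization of spanning trees
    intro T
    set S : Finset (Fin k ⊕ (Σ j : Fin k, Fin (j.val + 1))) :=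
      Finset.univ.image (Sum.inl : Fin k → (Fin k ⊕ (Σ j : Fin k, Fin (j.val + 1)))) with hS
    have hScard : S.card = k := by
      rw [hS, Finset.card_image_of_injective _ Sum.inl_injective, Finset.card_univ,
        Fintype.card_fin]
    constructor
    · rintro ⟨hF, hcard⟩
      -- T contains no loops
      have hnoloop : ∀ x ∈ T, ∃ m : Fin k, x = Sum.inl m := by
        intro x hx
        rcases x with m | ⟨j, a⟩
        · exact ⟨m, rfl⟩
        · exfalso
          obtain ⟨v, hv⟩ := hF {Sum.inr ⟨j, a⟩} (by simpa using hx) ⟨_, Finset.mem_singleton_self _⟩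
          rw [degIn, Finset.sum_singleton] at hv
          unfold endCount at hv
          rw [hloop j a, Sym2.lift_mk] at hv
          simp only at hv
          split_ifs at hv <;> omega
      have hTS : T ⊆ S := by
        intro x hx
        obtain ⟨m, rfl⟩ := hnoloop x hx
        exact Finset.mem_image.mpr ⟨m, Finset.mem_univ m, rfl⟩
      have : T ⊂ S := lt_of_le_of_ne hTS (by
        intro hEq; rw [hEq] at hcard; omega)
      obtain ⟨x, hxS, hxT⟩ := Finset.exists_of_ssubset this
      obtain ⟨i, _, rfl⟩ := Finset.mem_image.mp hxS
      refine ⟨i, ?_⟩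
      apply Finset.eq_of_subset_of_card_le
      · intro y hy
        exact Finset.mem_erase.mpr ⟨fun h => hxT (h ▸ hy), hTS hy⟩
      · rw [Finset.card_erase_of_mem hxS, hScard, hcard]
    · rintro ⟨i, rfl⟩
      have hiS : Sum.inl i ∈ S := Finset.mem_image.mpr ⟨i, Finset.mem_univ i, rfl⟩
      refine ⟨?_, by rw [Finset.card_erase_of_mem hiS, hScard]⟩
      intro F' hF' hFne
      -- every element of F' is some Sum.inl m with m ≠ i
      have hmem : ∀ x ∈ F', ∃ m : Fin k, x = Sum.inl m ∧ m ≠ i := by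
        intro x hx
        have := hF' hx
        rw [Finset.mem_erase] at this
        obtain ⟨hne, hxS⟩ := this
        obtain ⟨m, _, rfl⟩ := Finset.mem_image.mp hxS
        exact ⟨m, rfl, fun h => hne (by rw [h])⟩
      -- find j with inl j ∈ F' and inl (j+1) ∉ F'
      have hiF : Sum.inl i ∉ F' := by
        intro h
        obtain ⟨m, hm, hmi⟩ := hmem _ h
        exact hmi (Sum.inl_injective hm.symm)
      obtain ⟨x0, hx0⟩ := hFne
      obtain ⟨j0, rfl, _⟩ := hmem x0 hx0
      open Fin.NatCast in
      have hexists : ∃ j : Fin k, Sum.inl j ∈ F' ∧ Sum.inl (j + 1) ∉ F' := by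
        by_contra hcon
        push_neg at hcon
        have hstep : ∀ j : Fin k, Sum.inl j ∈ F' → Sum.inl (j + 1) ∈ F' := hcon
        have hall : ∀ n : ℕ, Sum.inl (j0 + (n : Fin k)) ∈ F' := by
          intro n
          induction n with
          | zero => simpa using hx0
          | succ n ih =>
            have := hstep _ ih
            have hc : ((n + 1 : ℕ) : Fin k) = (n : Fin k) + 1 := by push_cast; ring
            rw [hc, ← add_assoc]
            exact this
        have := hall ((i - j0).val)
        rw [Fin.cast_val_eq_self, add_sub_cancel] at this
        exact hiF this
      obtain ⟨j, hjF, hjF1⟩ := hexists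
      refine ⟨j + 1, ?_⟩
      rw [degIn, ← Finset.add_sum_erase _ _ hjF]
      have h1 : endCount ends (j + 1) (Sum.inl j) = 1 := by
        unfold endCount
        rw [hcyc' j, Sym2.lift_mk]
        simp only
        rw [if_neg (fun h => hne1 j h.symm)]
        simp
      have h2 : ∀ x ∈ F'.erase (Sum.inl j), endCount ends (j + 1) x = 0 := by
        intro x hx
        have hxF : x ∈ F' := Finset.mem_of_mem_erase hx
        have hxne : x ≠ Sum.inl j := Finset.ne_of_mem_erase hx
        obtain ⟨m, rfl, _⟩ := hmem x hxF
        have hmj : m ≠ j := fun h => hxne (by rw [h])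
        have hmj1 : m ≠ j + 1 := fun h => hjF1 (h ▸ hxF)
        unfold endCount
        rw [hcyc' m, Sym2.lift_mk]
        simp only
        rw [if_neg hmj1, if_neg (fun h : m + 1 = j + 1 => hmj (add_right_cancel h))]
      rw [Finset.sum_eq_zero h2, h1]
      rfl
  · -- orbit separation
    intro i i' f gp h himg
    have hfeq : ∀ v, f v = v := hfix f gp h
    have hgpinl : ∀ m : Fin k, gp (Sum.inl m) = Sum.inl m := by
      intro m
      have := h (Sum.inl m)
      rw [hcyc' m, Sym2.map_pair_eq, hfeq m, hfeq (m + 1)] at this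
      rcases hx : gp (Sum.inl m) with m' | ⟨j, a⟩
      · rw [hx, hcyc' m'] at this
        rw [Sym2.eq_iff] at this
        rcases this with ⟨h1, h2⟩ | ⟨h1, h2⟩
        · rw [h1]
        · exfalso; rw [h1] at h2; exact hne2 m' h2
      · exfalso
        rw [hx, hloop j a] at this
        rw [Sym2.eq_iff] at this
        have : m = j ∧ m + 1 = j := by tauto
        exact hne1 m (this.2.trans this.1.symm)
    set S : Finset (Fin k ⊕ (Σ j : Fin k, Fin (j.val + 1))) :=
      Finset.univ.image (Sum.inl : Fin k → (Fin k ⊕ (Σ j : Fin k, Fin (j.val + 1)))) with hS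
    have himg2 : Finset.image gp (S.erase (Sum.inl i)) = S.erase (Sum.inl i) := by
      rw [show Finset.image (⇑gp) (S.erase (Sum.inl i)) =
          Finset.image id (S.erase (Sum.inl i)) from ?_, Finset.image_id]
      apply Finset.image_congr
      intro x hx
      have hxS : x ∈ S := Finset.mem_of_mem_erase hx
      obtain ⟨m, _, rfl⟩ := Finset.mem_image.mp hxS
      exact hgpinl m
    rw [himg2] at himg
    by_contra hii
    have hi'S : Sum.inl i' ∈ S := Finset.mem_image.mpr ⟨i', Finset.mem_univ i', rfl⟩
    have : Sum.inl i' ∈ S.erase (Sum.inl i) :=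
      Finset.mem_erase.mpr ⟨fun h => hii (Sum.inl_injective h).symm, hi'S⟩
    rw [himg] at this
    exact (Finset.notMem_erase _ _) this
end
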